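/- Let p be a prime number and let Λ be an even, nondegenerate, p-primary lattice of rank at least 3 which contains the hyperbolic plane U as an orthogonal direct summand. Let c₁ ∈ Λ be a primitive element and let r be a nonzero integer such that either p does not divide r, or there exists y ∈ Λ with p ∤ B(c₁, y). Then there exists a primitive element x ∈ Λ with B(x, x) = 0 and gcd(r, B(c₁, x)) = 1. (This is the lattice-theoretic core of Theorem 4.9, establishing the existence of the required elliptic fibration class on a supersingular K3 surface.) -/

import Mathlib

section Aux

lemma not_dvd_both {m n q : ℤ} (h : IsCoprime m n) (hq : Prime q) (hm : q ∣ m) (hn : q ∣ n) :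
    False := by
  obtain ⟨u, v, huv⟩ := h
  have : q ∣ 1 := huv ▸ dvd_add (Dvd.dvd.mul_left hm u) (Dvd.dvd.mul_left hn v)
  exact hq.not_unit (isUnit_of_dvd_one this)

lemma split_aux (b : ℤ) : ∀ N : ℕ, ∀ s : ℤ, s.natAbs ≤ N → s ≠ 0 →
    ∃ m n : ℤ, m * n = s ∧ IsCoprime m n ∧
      (∀ q : ℕ, q.Prime → (q : ℤ) ∣ n → (q : ℤ) ∣ b) ∧
      (∀ q : ℕ, q.Prime → (q : ℤ) ∣ s → (q : ℤ) ∣ b → (q : ℤ) ∣ n) := by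
  intro N
  induction N with
  | zero => intro s hs hs0; exact absurd (Int.natAbs_eq_zero.mp (Nat.le_zero.mp hs)) hs0
  | succ N ih =>
    intro s hsN hs0
    by_cases hbase : ∀ q : ℕ, q.Prime → ¬ ((q : ℤ) ∣ s ∧ (q : ℤ) ∣ b)
    · refine ⟨s, 1, mul_one s, isCoprime_one_right, ?_, ?_⟩
      · intro q hq hq1
        exact absurd (Int.le_of_dvd one_pos hq1) (by exact_mod_cast Nat.not_le.2 hq.one_lt)
      · intro q hq hqs hqb; exact absurd ⟨hqs, hqb⟩ (hbase q hq)
    · push_neg at hbase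
      obtain ⟨q, hq, hqs, hqb⟩ := hbase
      obtain ⟨s', rfl⟩ := hqs
      have hs'0 : s' ≠ 0 := by rintro rfl; simp at hs0
      have hs'N : s'.natAbs ≤ N := by
        have h2 : 2 ≤ q := hq.two_le
        have heq : ((q:ℤ) * s').natAbs = q * s'.natAbs := by
          rw [Int.natAbs_mul, Int.natAbs_natCast]
        have h1 : 1 ≤ s'.natAbs := Nat.one_le_iff_ne_zero.2 (Int.natAbs_ne_zero.2 hs'0)
        have hge : 2 * s'.natAbs ≤ q * s'.natAbs := Nat.mul_le_mul_right _ h2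
        omega
      obtain ⟨m, n', hmn, hcop, hnb, hsn⟩ := ih s' hs'N hs'0
      have hqprime : Prime (q : ℤ) := by rw [Int.prime_iff_natAbs_prime]; simpa using hq
      refine ⟨m, q * n', by rw [← hmn]; ring, ?_, ?_, ?_⟩
      · have hqm : ¬ (q : ℤ) ∣ m := by
          intro hdvd
          have hqn' : (q:ℤ) ∣ n' := hsn q hq (hdvd.trans (Dvd.intro n' (by rw [← hmn]))) hqb
          exact not_dvd_both hcop hqprime hdvd hqn'
        exact (IsCoprime.mul_right ((hqprime.coprime_iff_not_dvd.2 hqm).symm) hcop)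
      · intro q' hq' hdvd
        rcases (Int.Prime.dvd_mul' hq' hdvd) with h | h
        · have : q' ∣ q := Int.ofNat_dvd.mp h
          rwa [(Nat.prime_dvd_prime_iff_eq hq' hq).mp this]
        · exact hnb q' hq' h
      · intro q' hq' hdvds hq'b
        by_cases hqq : q' = q
        · subst hqq; exact Dvd.intro n' rfl
        · have hq'q : ¬ (q' : ℤ) ∣ (q : ℤ) := by
            intro h
            exact hqq ((Nat.prime_dvd_prime_iff_eq hq' hq).mp (Int.ofNat_dvd.mp h))
          have : (q' : ℤ) ∣ s' := by
            rcases (Int.Prime.dvd_mul' hq' hdvds) with h | h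
            · exact absurd h hq'q
            · exact h
          exact (hsn q' hq' this hq'b).mul_left q

lemma split_lemma (b s : ℤ) (hs : s ≠ 0) :
    ∃ m n : ℤ, m * n = s ∧ IsCoprime m n ∧
      (∀ q : ℕ, q.Prime → (q : ℤ) ∣ n → (q : ℤ) ∣ b) ∧
      (∀ q : ℕ, q.Prime → (q : ℤ) ∣ s → (q : ℤ) ∣ b → (q : ℤ) ∣ n) :=
  split_aux b s.natAbs s le_rfl hs

lemma zsmul_finset_sum {ι Λ : Type*} [AddCommGroup Λ] (q : ℤ) (s : Finset ι) (f : ι → Λ) :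
    q • (∑ i ∈ s, f i) = ∑ i ∈ s, q • f i := by
  induction s using Finset.cons_induction with
  | empty => simp
  | cons a s ha ih => rw [Finset.sum_cons, Finset.sum_cons, zsmul_add, ih]

end Aux


/-- Lattice-theoretic core of Theorem 4.9: existence of a primitive isotropic
vector `x` with `gcd(r, B(c₁,x)) = 1` in an even, nondegenerate, `p`-primary
lattice of rank ≥ 3 containing the hyperbolic plane `U` as an orthogonal
direct summand. -/
theorem stmt_0
    (p : ℕ) (hp : p.Prime)
    (Λ : Type*) [AddCommGroup Λ] [Module ℤ Λ] [Module.Free ℤ Λ] [Module.Finite ℤ Λ]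
    (B : Λ →ₗ[ℤ] Λ →ₗ[ℤ] ℤ)
    (hB_symm : ∀ x y : Λ, B x y = B y x)
    (hB_even : ∀ x : Λ, (2 : ℤ) ∣ B x x)
    (hB_nondeg : ∀ x : Λ, (∀ y : Λ, B x y = 0) → x = 0)
    (hrank : 3 ≤ Module.finrank ℤ Λ)
    (hprimary : ∀ q : ℕ, q.Prime → q ≠ p →
      ∀ x : Λ, (∀ y : Λ, (q : ℤ) ∣ B x y) → ∃ z : Λ, x = (q : ℤ) • z)
    (f₁ f₂ : Λ) (Λ' : Submodule ℤ Λ)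
    (hf₁ : B f₁ f₁ = 0) (hf₂ : B f₂ f₂ = 0) (hf₁f₂ : B f₁ f₂ = 1)
    (horth : ∀ x ∈ Λ', B f₁ x = 0 ∧ B f₂ x = 0)
    (hcompl : IsCompl (Submodule.span ℤ ({f₁, f₂} : Set Λ)) Λ')
    (c₁ : Λ) (hc₁ : ∀ q : ℕ, q.Prime → ¬ ∃ y : Λ, c₁ = (q : ℤ) • y)
    (r : ℤ) (hr : r ≠ 0)
    (hcop : ¬ (p : ℤ) ∣ r ∨ ∃ y : Λ, ¬ (p : ℤ) ∣ B c₁ y) :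
    ∃ x : Λ, (∀ q : ℕ, q.Prime → ¬ ∃ y : Λ, x = (q : ℤ) • y) ∧
      B x x = 0 ∧ Int.gcd r (B c₁ x) = 1 := by
  classical
  set α : ℤ := B c₁ f₂ with hα_def
  set β : ℤ := B c₁ f₁ with hβ_def
  -- bilinearity helpers for the ℤ-smul coming from the group structure
  have hB2 : ∀ (a : ℤ) (u v : Λ), B u (a • v) = a * B u v := by
    intro a u v; simp [map_zsmul, zsmul_eq_mul]
  have hB1 : ∀ (a : ℤ) (u v : Λ), B (a • u) v = a * B u v := by
    intro a u v; rw [hB_symm, hB2, hB_symm]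
  have hBadd1 : ∀ u v w : Λ, B (u + v) w = B u w + B v w := by
    intro u v w; rw [hB_symm, map_add, hB_symm u w, hB_symm v w]
  -- decomposition
  have hdecomp : ∀ y : Λ, ∃ a b : ℤ, ∃ z ∈ Λ', y = a • f₁ + b • f₂ + z := by
    intro y
    have hy : y ∈ Submodule.span ℤ ({f₁, f₂} : Set Λ) ⊔ Λ' := by
      rw [codisjoint_iff.mp hcompl.codisjoint]; trivial
    obtain ⟨u, hu, v, hv, huv⟩ := Submodule.mem_sup.mp hy
    obtain ⟨a, b, hab⟩ := Submodule.mem_span_pair.mp hu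
    refine ⟨a, b, v, hv, ?_⟩
    rw [← huv, ← hab]
    all_goals try simp only [← Int.cast_smul_eq_zsmul ℤ (M := Λ), Int.cast_id]
  -- witnesses
  have hwitness : ∀ q : ℕ, q.Prime → (q : ℤ) ∣ r → ∃ y : Λ, ¬ (q : ℤ) ∣ B c₁ y := by
    intro q hq hqr
    by_cases hqp : q = p
    · subst hqp
      rcases hcop with h | h
      · exact absurd hqr h
      · exact h
    · by_contra hall
      push_neg at hall
      exact hc₁ q hq (hprimary q hq hqp c₁ hall)
  -- a vector of nonzero norm in Λ'
  have hΛ'wit : ∃ w ∈ Λ', B w w ≠ 0 := by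
    have hbotne : Λ' ≠ ⊥ := by
      intro hbot
      have hsp : Submodule.span ℤ ({f₁, f₂} : Set Λ) = ⊤ := by
        have h := codisjoint_iff.mp hcompl.codisjoint
        rwa [hbot, sup_bot_eq] at h
      have h1 := (rank_span_le (R := ℤ) ({f₁, f₂} : Set Λ)).trans
        (le_trans Cardinal.mk_insert_le (by rw [Cardinal.mk_singleton, one_add_one_eq_two]))
      rw [hsp, rank_top] at h1
      have h2 : Module.finrank ℤ Λ ≤ 2 := by
        apply Module.finrank_le_of_rank_le
        exact_mod_cast h1
      omega
    obtain ⟨z', hz'mem, hz'ne⟩ := (Submodule.ne_bot_iff Λ').mp hbotne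
    by_contra hall
    push_neg at hall
    have hbil : ∀ u ∈ Λ', ∀ v ∈ Λ', B u v = 0 := by
      intro u hu v hv
      have h1 := hall (u + v) (add_mem hu hv)
      have h2 : B (u + v) (u + v) = B u u + 2 * B u v + B v v := by
        rw [hBadd1, map_add, map_add, hB_symm v u]; ring
      have h3 := hall u hu
      have h4 := hall v hv
      rw [h1, h3, h4] at h2
      linarith
    apply hz'ne
    apply hB_nondeg
    intro y
    obtain ⟨a, b, v, hv, rfl⟩ := hdecomp y
    have e1 : B z' f₁ = 0 := by rw [hB_symm]; exact (horth z' hz'mem).1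
    have e2 : B z' f₂ = 0 := by rw [hB_symm]; exact (horth z' hz'mem).2
    rw [map_add, map_add, hB2, hB2, e1, e2, hbil z' hz'mem v hv]; ring
  obtain ⟨w₀, hw₀, hw₀ne⟩ := hΛ'wit
  -- the prime factors of r
  set P : Finset ℕ := r.natAbs.primeFactors with hP_def
  have hmemP : ∀ q : ℕ, q ∈ P ↔ q.Prime ∧ (q : ℤ) ∣ r := by
    intro q
    rw [hP_def, Nat.mem_primeFactors]
    constructor
    · rintro ⟨h1, h2, _⟩
      exact ⟨h1, (Int.natAbs_dvd_natAbs.mp (by simpa using h2) : (q:ℤ) ∣ r)⟩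
    · rintro ⟨h1, h2⟩
      refine ⟨h1, ?_, Int.natAbs_ne_zero.mpr hr⟩
      have := Int.natAbs_dvd_natAbs.mpr h2
      simpa using this
  set Cs : Finset ℕ := P.filter (fun q => (q : ℤ) ∣ α ∧ (q : ℤ) ∣ β) with hCs_def
  have hCsP : Cs ⊆ P := Finset.filter_subset _ _
  -- witnesses in Λ' for the C-primes
  have hzc : ∀ q ∈ Cs, ∃ z, z ∈ Λ' ∧ ¬ (q : ℤ) ∣ B c₁ z := by
    intro q hqC
    rw [hCs_def, Finset.mem_filter] at hqC
    obtain ⟨hqP, hqα, hqβ⟩ := hqC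
    obtain ⟨hq, hqr⟩ := (hmemP q).mp hqP
    obtain ⟨y, hy⟩ := hwitness q hq hqr
    obtain ⟨a, b, z, hz, rfl⟩ := hdecomp y
    refine ⟨z, hz, fun hdvd => hy ?_⟩
    have h1 : B c₁ (a • f₁ + b • f₂ + z) = a * β + b * α + B c₁ z := by
      rw [map_add, map_add, hB2, hB2, ← hα_def, ← hβ_def]
    rw [h1]
    exact dvd_add (dvd_add (hqβ.mul_left a) (hqα.mul_left b)) hdvd
  choose! zf hzf hzfnd using hzc
  -- CRT coefficients
  have hecrt : ∀ q ∈ Cs, ∃ e : ℤ, (q : ℤ) ∣ (e - 1) ∧ ∀ q' ∈ P, q' ≠ q → (q' : ℤ) ∣ e := by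
    intro q hqC
    have hqP := hCsP hqC
    obtain ⟨hq, -⟩ := (hmemP q).mp hqP
    have hqZ : Prime (q : ℤ) := by rw [Int.prime_iff_natAbs_prime]; simpa using hq
    set M : ℤ := ∏ q' ∈ P.erase q, (q' : ℤ) with hM_def
    have hqM : ¬ (q : ℤ) ∣ M := by
      intro hdvd
      obtain ⟨q', hq'mem, hq'dvd⟩ := hqZ.exists_mem_finset_dvd hdvd
      obtain ⟨hne, hq'P⟩ := Finset.mem_erase.mp hq'mem
      obtain ⟨hq', -⟩ := (hmemP q').mp hq'P
      exact hne ((Nat.prime_dvd_prime_iff_eq hq hq').mp (Int.ofNat_dvd.mp hq'dvd)).symm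
    obtain ⟨u, v, huv⟩ := hqZ.coprime_iff_not_dvd.mpr hqM
    refine ⟨v * M, ⟨-u, by linarith⟩, ?_⟩
    intro q' hq'P hne
    have : (q' : ℤ) ∣ M := Finset.dvd_prod_of_mem _ (Finset.mem_erase.mpr ⟨hne, hq'P⟩)
    exact this.mul_left v
  choose! ef hef1 hef2 using hecrt
  set z₀ : Λ := ∑ q ∈ Cs, ef q • zf q with hz₀_def
  have hz₀mem : z₀ ∈ Λ' := Submodule.sum_mem _ (fun q hq => zsmul_mem (hzf q hq) (ef q))
  have hexp : B c₁ z₀ = ∑ q' ∈ Cs, ef q' * B c₁ (zf q') := by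
    rw [hz₀_def, map_sum]
    exact Finset.sum_congr rfl fun q' _ => hB2 _ _ _
  have hBz₀ : ∀ q ∈ Cs, (q : ℤ) ∣ (B c₁ z₀ - B c₁ (zf q)) := by
    intro q hqC
    have key : B c₁ z₀ - B c₁ (zf q) =
        (ef q - 1) * B c₁ (zf q) + ∑ q' ∈ Cs.erase q, ef q' * B c₁ (zf q') := by
      rw [hexp, ← Finset.add_sum_erase _ _ hqC]; ring
    rw [key]
    refine dvd_add ((hef1 q hqC).mul_right _) (Finset.dvd_sum ?_)
    intro q' hq'
    obtain ⟨hne, hq'Cs⟩ := Finset.mem_erase.mp hq'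
    exact (hef2 q' hq'Cs q (hCsP hqC) (Ne.symm hne)).mul_right _
  have hqz₀ : ∀ q ∈ P, q ∉ Cs → ∃ w ∈ Λ', z₀ = (q : ℤ) • w := by
    intro q hqP hqCs
    have hdvd : ∀ q' ∈ Cs, ∃ k : ℤ, ef q' = (q : ℤ) * k := by
      intro q' hq'
      exact (hef2 q' hq' q hqP (by rintro rfl; exact hqCs hq'))
    choose! k hk using hdvd
    refine ⟨∑ q' ∈ Cs, k q' • zf q', Submodule.sum_mem _
      (fun q' hq' => zsmul_mem (hzf q' hq') (k q')), ?_⟩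
    rw [hz₀_def, zsmul_finset_sum]
    refine Finset.sum_congr rfl fun q' hq' => ?_
    rw [hk q' hq', mul_zsmul]
  -- perturbation to make the norm nonzero
  have hgen : ∀ t : ℤ, B (z₀ + t • w₀) (z₀ + t • w₀) =
      B z₀ z₀ + 2 * t * B z₀ w₀ + t ^ 2 * B w₀ w₀ := by
    intro t
    simp only [hBadd1, map_add, LinearMap.add_apply, hB1, hB2, hB_symm w₀ z₀]; ring
  have hpert : ∃ t : ℤ, r ∣ t ∧ B (z₀ + t • w₀) (z₀ + t • w₀) ≠ 0 := by
    by_contra hc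
    push_neg at hc
    have h0 := hc 0 (dvd_zero r)
    have h1 := hc r dvd_rfl
    have h2 := hc (2 * r) ⟨2, mul_comm 2 r⟩
    rw [hgen] at h0 h1 h2
    have hD : r ^ 2 * B w₀ w₀ = 0 := by linarith
    exact mul_ne_zero (pow_ne_zero _ hr) hw₀ne hD
  obtain ⟨t, htr, hznorm⟩ := hpert
  obtain ⟨z, hz_def⟩ : ∃ z : Λ, z = z₀ + t • w₀ := ⟨_, rfl⟩
  rw [← hz_def] at hznorm
  have hzmem : z ∈ Λ' := by rw [hz_def]; exact Submodule.add_mem _ hz₀mem (zsmul_mem hw₀ t)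
  obtain ⟨s, hs⟩ := hB_even z
  have hsne : s ≠ 0 := by
    intro h; rw [h, mul_zero] at hs; exact hznorm hs
  -- key properties of z
  have hzC : ∀ q ∈ Cs, ¬ (q : ℤ) ∣ B c₁ z := by
    intro q hqC hdvd
    obtain ⟨hq, hqr⟩ := (hmemP q).mp (hCsP hqC)
    have h1 : B c₁ z = B c₁ z₀ + t * B c₁ w₀ := by
      rw [hz_def, map_add, hB2]

    apply hzfnd q hqC
    have h2 : (q : ℤ) ∣ t * B c₁ w₀ := (hqr.trans htr).mul_right _
    have h3 := hBz₀ q hqC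
    have h4 : B c₁ (zf q) = B c₁ z - t * B c₁ w₀ - (B c₁ z₀ - B c₁ (zf q)) := by
      rw [h1]; ring
    rw [h4]
    exact dvd_sub (dvd_sub hdvd h2) h3
  have hznC : ∀ q ∈ P, q ∉ Cs → (q : ℤ) ∣ B c₁ z ∧ (q : ℤ) ∣ s := by
    intro q hqP hqCs
    obtain ⟨w, hw, hw'⟩ := hqz₀ q hqP hqCs
    obtain ⟨hq, hqr⟩ := (hmemP q).mp hqP
    obtain ⟨t', rfl⟩ := hqr.trans htr
    have hv : z = (q : ℤ) • (w + t' • w₀) := by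
      rw [hz_def, hw', mul_zsmul, ← zsmul_add]
    constructor
    · rw [hv, hB2]; exact Dvd.intro _ rfl
    · obtain ⟨sv, hsv⟩ := hB_even (w + t' • w₀)
      have h5 : 2 * s = (q : ℤ) * ((q : ℤ) * (2 * sv)) := by
        rw [← hs, ← hsv, hv, hB1, hB2]
      have hss : s = (q : ℤ) * ((q : ℤ) * sv) := by linarith
      exact ⟨(q : ℤ) * sv, hss⟩
  -- split -s into coprime factors
  obtain ⟨m, n, hmn, hcopmn, hnb, hsn⟩ :=
    split_lemma ((Int.gcd α r : ℕ) : ℤ) (-s) (neg_ne_zero.mpr hsne)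
  have hzf₁ : B z f₁ = 0 := by rw [hB_symm]; exact (horth z hzmem).1
  have hzf₂ : B z f₂ = 0 := by rw [hB_symm]; exact (horth z hzmem).2
  have hf₁z : B f₁ z = 0 := (horth z hzmem).1
  have hf₂z : B f₂ z = 0 := (horth z hzmem).2
  have hf₂f₁ : B f₂ f₁ = 1 := by rw [hB_symm]; exact hf₁f₂
  obtain ⟨x, hx_def⟩ : ∃ x : Λ, x = m • f₁ + n • f₂ + z := ⟨_, rfl⟩
  have hVx : B c₁ x = m * β + n * α + B c₁ z := by
    rw [hx_def, map_add, map_add, hB2, hB2, ← hα_def, ← hβ_def]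
  refine ⟨x, ?_, ?_, ?_⟩
  · -- primitivity
    rintro q hq ⟨y, hy⟩
    have hqZ : Prime (q : ℤ) := by rw [Int.prime_iff_natAbs_prime]; simpa using hq
    have e1 : B x f₂ = m := by
      rw [hx_def]; simp only [hBadd1, hB1, hf₁f₂, hf₂, hzf₂]; ring
    have e2 : B x f₁ = n := by
      rw [hx_def]; simp only [hBadd1, hB1, hf₁, hf₂f₁, hzf₁]; ring
    have d1 : (q : ℤ) ∣ m := ⟨B y f₂, by rw [← e1, hy, hB1]⟩
    have d2 : (q : ℤ) ∣ n := ⟨B y f₁, by rw [← e2, hy, hB1]⟩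
    exact not_dvd_both hcopmn hqZ d1 d2
  · -- isotropy
    have e3 : B x x = m * n + n * m + B z z := by
      rw [hx_def]
      simp only [hBadd1, map_add, LinearMap.add_apply, hB1, hB2, hf₁, hf₂, hf₁f₂, hf₂f₁, hzf₁, hzf₂,
        hf₁z, hf₂z]
      ring
    rw [e3, hs]
    linarith [hmn]
  · -- the gcd condition
    by_contra hgcd
    have hg0 : Int.gcd r (B c₁ x) ≠ 0 := by
      intro h
      exact hr (Int.gcd_eq_zero_iff.mp h).1
    obtain ⟨q, hq, hqg⟩ := Nat.exists_prime_and_dvd hgcd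
    have hqr : (q : ℤ) ∣ r :=
      dvd_trans (Int.ofNat_dvd.mpr hqg) (Int.gcd_dvd_left _ _)
    have hqV : (q : ℤ) ∣ B c₁ x :=
      dvd_trans (Int.ofNat_dvd.mpr hqg) (Int.gcd_dvd_right _ _)
    have hqZ : Prime (q : ℤ) := by rw [Int.prime_iff_natAbs_prime]; simpa using hq
    have hqP : q ∈ P := (hmemP q).mpr ⟨hq, hqr⟩
    rw [hVx] at hqV
    by_cases hqCs : q ∈ Cs
    · obtain ⟨-, hqα, hqβ⟩ := Finset.mem_filter.mp hqCs
      apply hzC q hqCs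
      have h6 : B c₁ z = (m * β + n * α + B c₁ z) - m * β - n * α := by ring
      rw [h6]
      exact dvd_sub (dvd_sub hqV (hqβ.mul_left m)) (hqα.mul_left n)
    · obtain ⟨hqBz, hqs⟩ := hznC q hqP hqCs
      by_cases hqα : (q : ℤ) ∣ α
      · have hqβ : ¬ (q : ℤ) ∣ β := fun h =>
          hqCs (Finset.mem_filter.mpr ⟨hqP, hqα, h⟩)
        have hqgcd : (q : ℤ) ∣ ((Int.gcd α r : ℕ) : ℤ) := Int.dvd_coe_gcd hqα hqr
        have hqn : (q : ℤ) ∣ n := hsn q hq (dvd_neg.mpr hqs) hqgcd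
        have hqm : ¬ (q : ℤ) ∣ m := fun h => not_dvd_both hcopmn hqZ h hqn
        have h7 : (q : ℤ) ∣ m * β := by
          have h8 : m * β = (m * β + n * α + B c₁ z) - n * α - B c₁ z := by ring
          rw [h8]
          exact dvd_sub (dvd_sub hqV (hqn.mul_right α)) hqBz
        rcases hqZ.dvd_mul.mp h7 with h | h
        · exact hqm h
        · exact hqβ h
      · have hqn : ¬ (q : ℤ) ∣ n := by
          intro h
          exact hqα (dvd_trans (hnb q hq h) (Int.gcd_dvd_left _ _))
        have hqm : (q : ℤ) ∣ m := by
          have h9 : (q : ℤ) ∣ m * n := by rw [hmn]; exact dvd_neg.mpr hqs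
          rcases hqZ.dvd_mul.mp h9 with h | h
          · exact h
          · exact absurd h hqn
        have h10 : (q : ℤ) ∣ n * α := by
          have h11 : n * α = (m * β + n * α + B c₁ z) - m * β - B c₁ z := by ring
          rw [h11]
          exact dvd_sub (dvd_sub hqV (hqm.mul_right β)) hqBz
        rcases hqZ.dvd_mul.mp h10 with h | h
        · exact hqn h
        · exact hqα h
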